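/- Let f, g ≥ 0 be spectral densities with integrable logarithms and outer spectral factors f⁺, g⁺. Then ‖f⁺ − g⁺‖²_{H²} ≥ 2∫_{-π}^{π} f(θ)(1 − cos((1/2)(log f(θ) − log g(θ))~)) dθ − 4‖f − g‖_{L¹}. -/

import Mathlib

open MeasureTheory Set

lemma normsq_aux (a b α β : ℝ) :
    ‖(a:ℂ) * Complex.exp (Complex.I * (α:ℂ) / 2) - (b:ℂ) * Complex.exp (Complex.I * (β:ℂ) / 2)‖ ^ 2
      = a^2 + b^2 - 2*a*b*Real.cos ((α-β)/2) := by
  have h1 : Complex.I * (α:ℂ) / 2 = ((α/2 : ℝ):ℂ) * Complex.I := by push_cast; ring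
  have h2 : Complex.I * (β:ℂ) / 2 = ((β/2 : ℝ):ℂ) * Complex.I := by push_cast; ring
  rw [h1, h2, Complex.exp_mul_I, Complex.exp_mul_I]
  have hc : Real.cos ((α-β)/2) = Real.cos (α/2) * Real.cos (β/2) + Real.sin (α/2) * Real.sin (β/2) := by
    rw [show (α-β)/2 = α/2 - β/2 by ring, Real.cos_sub]
  rw [hc, ← Complex.ofReal_cos, ← Complex.ofReal_sin, ← Complex.ofReal_cos, ← Complex.ofReal_sin,
    Complex.sq_norm]
  simp only [Complex.sq_norm, Complex.normSq_apply, Complex.sub_re, Complex.sub_im,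
    Complex.mul_re, Complex.mul_im, Complex.add_re, Complex.add_im, Complex.ofReal_re,
    Complex.ofReal_im, Complex.I_re, Complex.I_im]
  nlinarith [Real.sin_sq_add_cos_sq (α/2), Real.sin_sq_add_cos_sq (β/2)]

lemma key_ineq (fv gv c : ℝ) (hf : 0 ≤ fv) (hg : 0 ≤ gv) (hc : |c| ≤ 1) :
    2*fv*(1-c) - 4*|fv-gv| ≤ fv + gv - 2*Real.sqrt fv*Real.sqrt gv*c := by
  set s := Real.sqrt fv with hs'
  set t := Real.sqrt gv with ht'
  have hs : s*s = fv := Real.mul_self_sqrt hf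
  have ht : t*t = gv := Real.mul_self_sqrt hg
  have hs0 : 0 ≤ s := Real.sqrt_nonneg _
  have ht0 : 0 ≤ t := Real.sqrt_nonneg _
  have hst : |s*(s-t)| ≤ |fv-gv| := by
    calc |s*(s-t)| = s*|s-t| := by rw [abs_mul, abs_of_nonneg hs0]
    _ ≤ (s+t)*|s-t| := by nlinarith [abs_nonneg (s-t)]
    _ = |(s+t)*(s-t)| := by rw [abs_mul, abs_of_nonneg (show (0:ℝ) ≤ s+t by linarith)]
    _ = |fv-gv| := by rw [show (s+t)*(s-t) = s*s - t*t by ring, hs, ht]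
  have h3 : |c*(s*(s-t))| ≤ |s*(s-t)| := by
    rw [abs_mul]; exact mul_le_of_le_one_left (abs_nonneg _) hc
  have h4 : -(|fv-gv|) ≤ c*(s*(s-t)) := by
    have := neg_abs_le (c*(s*(s-t)))
    linarith [h3.trans hst]
  have h5 : fv - gv ≤ |fv-gv| := le_abs_self _
  have h6 : 0 ≤ |fv-gv| := abs_nonneg _
  have hid : fv*c - s*t*c = c*(s*(s-t)) := by rw [← hs]; ring
  linarith [h4, h5, h6]

/-- Lower bound for the `H²` distance of spectral factors:
`‖f⁺ − g⁺‖²_{H²} ≥ 2∫ f(1 − cos(½(log f − log g)~)) − 4‖f − g‖_{L¹}`.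
Here `F, G` are the boundary values of `f⁺, g⁺`, with `A = (log f)~`,
`B = (log g)~`, so `(log f − log g)~ = A − B`. -/
theorem stmt13 (f g : ℝ → ℝ)
    (hf0 : ∀ θ, 0 ≤ f θ) (hg0 : ∀ θ, 0 ≤ g θ)
    (hf : IntegrableOn f (Ico (-Real.pi) Real.pi))
    (hg : IntegrableOn g (Ico (-Real.pi) Real.pi))
    (hlogf : IntegrableOn (fun θ => Real.log (f θ)) (Ico (-Real.pi) Real.pi))
    (hlogg : IntegrableOn (fun θ => Real.log (g θ)) (Ico (-Real.pi) Real.pi))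
    (A B : ℝ → ℝ) (hA : Measurable A) (hB : Measurable B)
    (F G : ℝ → ℂ)
    (hF : ∀ θ, F θ = (Real.sqrt (f θ) : ℂ) * Complex.exp (Complex.I * (A θ : ℂ) / 2))
    (hG : ∀ θ, G θ = (Real.sqrt (g θ) : ℂ) * Complex.exp (Complex.I * (B θ : ℂ) / 2)) :
    2 * (∫ θ in Ico (-Real.pi) Real.pi,
        f θ * (1 - Real.cos ((A θ - B θ) / 2))) -
      4 * (∫ θ in Ico (-Real.pi) Real.pi, |f θ - g θ|) ≤
    ∫ θ in Ico (-Real.pi) Real.pi, ‖F θ - G θ‖ ^ 2 := by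
  have hFG : ∀ θ, ‖F θ - G θ‖ ^ 2
      = f θ + g θ - 2 * Real.sqrt (f θ) * Real.sqrt (g θ) * Real.cos ((A θ - B θ) / 2) := by
    intro θ
    rw [hF θ, hG θ, normsq_aux, Real.sq_sqrt (hf0 θ), Real.sq_sqrt (hg0 θ)]
  have hcos : Measurable fun θ => Real.cos ((A θ - B θ) / 2) :=
    ((hA.sub hB).div_const 2).cos
  have h1 : IntegrableOn (fun θ => f θ * (1 - Real.cos ((A θ - B θ) / 2)))
      (Ico (-Real.pi) Real.pi) := by
    refine Integrable.mono' (hf.const_mul 2) ?_ ?_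
    · exact hf.1.mul (measurable_const.sub hcos).aestronglyMeasurable
    · filter_upwards with θ
      have hc1 := Real.neg_one_le_cos ((A θ - B θ) / 2)
      have hc2 := Real.cos_le_one ((A θ - B θ) / 2)
      rw [Real.norm_eq_abs, abs_mul, abs_of_nonneg (hf0 θ)]
      have : |1 - Real.cos ((A θ - B θ) / 2)| ≤ 2 := by rw [abs_le]; constructor <;> linarith
      nlinarith [hf0 θ, abs_nonneg (1 - Real.cos ((A θ - B θ) / 2))]
  have h2 : IntegrableOn (fun θ => |f θ - g θ|) (Ico (-Real.pi) Real.pi) := (hf.sub hg).abs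
  have hsf : AEStronglyMeasurable (fun θ => Real.sqrt (f θ))
      (volume.restrict (Ico (-Real.pi) Real.pi)) :=
    Real.continuous_sqrt.comp_aestronglyMeasurable hf.1
  have hsg : AEStronglyMeasurable (fun θ => Real.sqrt (g θ))
      (volume.restrict (Ico (-Real.pi) Real.pi)) :=
    Real.continuous_sqrt.comp_aestronglyMeasurable hg.1
  have h3 : IntegrableOn (fun θ =>
      f θ + g θ - 2 * Real.sqrt (f θ) * Real.sqrt (g θ) * Real.cos ((A θ - B θ) / 2))
      (Ico (-Real.pi) Real.pi) := by
    refine Integrable.mono' ((hf.add hg).const_mul 2) ?_ ?_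
    · exact (hf.1.add hg.1).sub
        ((((hsf.const_mul 2).mul hsg)).mul hcos.aestronglyMeasurable)
    · filter_upwards with θ
      have hc1 := Real.neg_one_le_cos ((A θ - B θ) / 2)
      have hc2 := Real.cos_le_one ((A θ - B θ) / 2)
      have hs : Real.sqrt (f θ) * Real.sqrt (f θ) = f θ := Real.mul_self_sqrt (hf0 θ)
      have ht : Real.sqrt (g θ) * Real.sqrt (g θ) = g θ := Real.mul_self_sqrt (hg0 θ)
      have hs0 : 0 ≤ Real.sqrt (f θ) := Real.sqrt_nonneg _
      have ht0 : 0 ≤ Real.sqrt (g θ) := Real.sqrt_nonneg _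
      rw [Real.norm_eq_abs, abs_le, Pi.add_apply]
      constructor <;> nlinarith [sq_nonneg (Real.sqrt (f θ) - Real.sqrt (g θ)),
        sq_nonneg (Real.sqrt (f θ) + Real.sqrt (g θ))]
  simp only [hFG]
  rw [← integral_const_mul, ← integral_const_mul,
    ← integral_sub (h1.const_mul 2) (h2.const_mul 4)]
  refine integral_mono ((h1.const_mul 2).sub (h2.const_mul 4)) h3 fun θ => ?_
  have := key_ineq (f θ) (g θ) (Real.cos ((A θ - B θ) / 2)) (hf0 θ) (hg0 θ)
    (Real.abs_cos_le_one _)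
  simp only
  linarith [this]
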